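/- arXiv:1302.0745 — 2 statements merged into one kernel-verified Lean document; each statement's English description precedes it below -/
import Mathlib

section
/- Let R be a finite set of vectors in ℝ^n containing at least one nonzero vector, and suppose there exists v ∈ ℝ^n such that v · r > 0 for all r ∈ R. Then there exist a vector u ∈ ℝ^n and a vector r_⊥ ∈ R such that u · r_⊥ = 0 and for every r ∈ R, either u · r > 0 or r = p · r_⊥ for some real p > 0. -/
noncomputable def dotFun (n : ℕ) (c : Fin n → ℝ) : (Fin n → ℝ) →ₗ[ℝ] ℝ where
  toFun w := ∑ i, w i * c i
  map_add' w w' := by simp [add_mul, Finset.sum_add_distrib]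
  map_smul' a w := by simp [Finset.mul_sum, mul_assoc]

lemma exists_generic (n : ℕ) (C : Finset (Fin n → ℝ)) (hC : ∀ c ∈ C, c ≠ 0) :
    ∃ w : Fin n → ℝ, ∀ c ∈ C, (∑ i, w i * c i) ≠ 0 := by
  classical
  set s : Finset (Subspace ℝ (Fin n → ℝ)) := C.image fun c => LinearMap.ker (dotFun n c)
  have htop : ⊤ ∉ s := by
    intro h
    obtain ⟨c, hc, hker⟩ := Finset.mem_image.mp h
    have hcne := hC c hc
    have : c ∈ LinearMap.ker (dotFun n c) := by rw [hker]; trivial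
    have hzero : (∑ i, c i * c i) = 0 := this
    have : c = 0 := by
      funext i
      have h := Finset.sum_eq_zero_iff_of_nonneg (fun i _ => mul_self_nonneg (c i)) |>.mp hzero i (Finset.mem_univ i)
      have : c i = 0 := by nlinarith
      simpa using this
    exact hcne this
  have hne := Subspace.biUnion_ne_univ_of_top_notMem htop
  have : ∃ w : Fin n → ℝ, w ∉ ⋃ p ∈ s, (p : Set (Fin n → ℝ)) := by
    by_contra h
    push_neg at h
    exact hne (Set.eq_univ_of_forall h)
  obtain ⟨w, hw⟩ := this
  refine ⟨w, fun c hc h0 => hw ?_⟩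
  simp only [Set.mem_iUnion]
  exact ⟨LinearMap.ker (dotFun n c), Finset.mem_image_of_mem _ hc, h0⟩

theorem stmt_2 (n : ℕ) (R : Finset (Fin n → ℝ))
    (hnz : ∃ r ∈ R, r ≠ (0 : Fin n → ℝ))
    (hv : ∃ v : Fin n → ℝ, ∀ r ∈ R, 0 < ∑ i, v i * r i) :
    ∃ (u : Fin n → ℝ) (rp : Fin n → ℝ), rp ∈ R ∧ (∑ i, u i * rp i) = 0 ∧
      ∀ r ∈ R, (0 < ∑ i, u i * r i) ∨ ∃ p : ℝ, 0 < p ∧ r = p • rp := by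
  classical
  obtain ⟨v, hv⟩ := hv
  set d : (Fin n → ℝ) → (Fin n → ℝ) → ℝ := fun u r => ∑ i, u i * r i with hd
  -- the finite set of "difference" vectors
  set C : Finset (Fin n → ℝ) :=
    ((R ×ˢ R).image fun p => (d v p.2) • p.1 - (d v p.1) • p.2).filter (· ≠ 0) with hCdef
  obtain ⟨w, hw⟩ := exists_generic n C (fun c hc => (Finset.mem_filter.mp hc).2)
  -- R nonempty
  obtain ⟨r0, hr0, -⟩ := hnz
  -- minimize f r = d w r / d v r
  obtain ⟨rp, hrp, hmin⟩ := R.exists_min_image (fun r => d w r / d v r) ⟨r0, hr0⟩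
  have hvrp : 0 < d v rp := hv rp hrp
  refine ⟨w - (d w rp / d v rp) • v, rp, hrp, ?_, ?_⟩
  · show (∑ i, (w - (d w rp / d v rp) • v) i * rp i) = 0
    have : (∑ i, (w - (d w rp / d v rp) • v) i * rp i)
        = d w rp - (d w rp / d v rp) * d v rp := by
      simp [hd, sub_mul, Finset.sum_sub_distrib, Finset.mul_sum, mul_assoc]
    rw [this, div_mul_cancel₀ _ (ne_of_gt hvrp), sub_self]
  · intro r hr
    have hvr : 0 < d v r := hv r hr
    have hsum : (∑ i, (w - (d w rp / d v rp) • v) i * r i)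
        = d v r * (d w r / d v r - d w rp / d v rp) := by
      have : (∑ i, (w - (d w rp / d v rp) • v) i * r i)
          = d w r - (d w rp / d v rp) * d v r := by
        simp [hd, sub_mul, Finset.sum_sub_distrib, Finset.mul_sum, mul_assoc]
      rw [this]
      field_simp
    have hle : d w rp / d v rp ≤ d w r / d v r := hmin r hr
    rcases lt_or_eq_of_le hle with hlt | heq
    · left
      rw [hsum]
      exact mul_pos hvr (by linarith)
    · right
      -- show the difference vector is zero
      have hcz : (d v rp) • r - (d v r) • rp = 0 := by
        by_contra hcne
        have hcC : ((d v rp) • r - (d v r) • rp) ∈ C := by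
          rw [hCdef]
          refine Finset.mem_filter.mpr ⟨?_, hcne⟩
          exact Finset.mem_image.mpr ⟨(r, rp), Finset.mem_product.mpr ⟨hr, hrp⟩, rfl⟩
        apply hw _ hcC
        show (∑ i, w i * ((d v rp) • r - (d v r) • rp) i) = 0
        have expand : (∑ i, w i * ((d v rp) • r - (d v r) • rp) i)
            = d v rp * d w r - d v r * d w rp := by
          simp [hd, mul_sub, Finset.sum_sub_distrib, Finset.mul_sum]
          ring_nf
          congr 1 <;> · apply Finset.sum_congr rfl; intros; ring
        rw [expand]
        have h1 : d w r = (d w r / d v r) * d v r := (div_mul_cancel₀ _ (ne_of_gt hvr)).symm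
        have h2 : d w rp = (d w rp / d v rp) * d v rp := (div_mul_cancel₀ _ (ne_of_gt hvrp)).symm
        rw [h1, h2, ← heq]
        ring
      refine ⟨d v r / d v rp, div_pos hvr hvrp, ?_⟩
      have heq2 : (d v rp) • r = (d v r) • rp := sub_eq_zero.mp hcz
      have := congrArg (fun x => (d v rp)⁻¹ • x) heq2
      simp only [smul_smul, inv_mul_cancel₀ (ne_of_gt hvrp), one_smul] at this
      have hcoef : d v r / d v rp = (d v rp)⁻¹ * d v r := by
        field_simp
      rw [hcoef]
      exact this
end

section
/- Let u, r_⊥ ∈ ℝ^2 with u · r_⊥ = 0, and let R ⊆ ℝ^2 be a finite set such that for every r ∈ R, u · r ≥ 0. Suppose there exists at least one r ∈ R with u · r > 0, and every r ∈ R with u · r = 0 satisfies r_⊥ · r > 0. Let τ = min { u · r : r ∈ R, u · r > 0 } and κ = min { r_⊥ · r : r ∈ R }, and set v = u + (τ / (2·(|κ|+1))) · r_⊥. Then v · r > 0 for every r ∈ R. -/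
theorem stmt_18 (u rp : Fin 2 → ℝ) (R : Finset (Fin 2 → ℝ))
    (hperp : (∑ i, u i * rp i) = 0)
    (hnonneg : ∀ r ∈ R, 0 ≤ ∑ i, u i * r i)
    (hpos : (R.filter (fun r => 0 < ∑ i, u i * r i)).Nonempty)
    (hzero : ∀ r ∈ R, (∑ i, u i * r i) = 0 → 0 < ∑ i, rp i * r i) :
    let τ : ℝ := (R.filter (fun r => 0 < ∑ i, u i * r i)).inf'
      (by exact hpos) (fun r => ∑ i, u i * r i)
    let κ : ℝ := R.inf' (hpos.mono (R.filter_subset _)) (fun r => ∑ i, rp i * r i)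
    let v : Fin 2 → ℝ := u + (τ / (2 * (|κ| + 1))) • rp
    ∀ r ∈ R, 0 < ∑ i, v i * r i := by
  intro τ κ v r hr
  have hτpos : 0 < τ := by
    obtain ⟨r₀, hr₀, h0⟩ := Finset.exists_mem_eq_inf'
      hpos (fun r => ∑ i, u i * r i)
    rw [Finset.mem_filter] at hr₀
    simpa [τ, ← h0] using hr₀.2
  have hcpos : 0 < τ / (2 * (|κ| + 1)) := by
    apply div_pos hτpos
    positivity
  have hvr : (∑ i, v i * r i) = (∑ i, u i * r i) + (τ / (2 * (|κ| + 1))) * ∑ i, rp i * r i := by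
    simp only [v, Pi.add_apply, Pi.smul_apply, smul_eq_mul, add_mul, mul_assoc,
      Finset.sum_add_distrib, Finset.mul_sum]
  rw [hvr]
  rcases eq_or_lt_of_le (hnonneg r hr) with h0 | hp
  · have := hzero r hr h0.symm
    rw [← h0]
    positivity
  · have hτle : τ ≤ ∑ i, u i * r i :=
      Finset.inf'_le _ (Finset.mem_filter.mpr ⟨hr, hp⟩)
    have hκle : κ ≤ ∑ i, rp i * r i := Finset.inf'_le _ hr
    have hκabs : -|κ| ≤ κ := neg_abs_le κ
    have habs1 : (0:ℝ) ≤ |κ| := abs_nonneg κ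
    have key : (τ / (2 * (|κ| + 1))) * ∑ i, rp i * r i ≥ -(τ/2) := by
      have h1 : (τ / (2 * (|κ| + 1))) * ∑ i, rp i * r i ≥ (τ / (2 * (|κ| + 1))) * (-|κ|) := by
        apply mul_le_mul_of_nonneg_left (le_trans hκabs hκle) hcpos.le
      refine le_trans ?_ h1
      rw [div_mul_eq_mul_div, le_div_iff₀ (by positivity)]
      nlinarith
    nlinarith
end
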